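/- arXiv:1710.04574 — 7 statements merged into one kernel-verified Lean document; each statement's English description precedes it below -/
import Mathlib

section
/- Ray-Chaudhuri–Wilson inequality: for every t-(v,u,λ) design with b blocks and every s ≤ min(t/2, v−u), we have b ≥ C(v,s). -/
open Finset

section RWaux
set_option linter.unusedSectionVars false
variable {V : Type*} [Fintype V] [DecidableEq V] {ι : Type*} [Fintype ι]

lemma rw_sandwich (X Y : Finset V) (hYX : Y ⊆ X) (d : ℕ) :
    ((X.powersetCard (Y.card + d)).filter (fun T => Y ⊆ T)).card
      = (X.card - Y.card).choose d := by
  rw [← card_sdiff_of_subset hYX, ← Finset.card_powersetCard d (X \ Y)]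
  apply Finset.card_bij' (fun T _ => T \ Y) (fun W _ => W ∪ Y)
  · intro T hT
    simp only [mem_filter, mem_powersetCard] at hT
    obtain ⟨⟨hTX, hTc⟩, hYT⟩ := hT
    simp only [mem_powersetCard]
    constructor
    · exact sdiff_subset_sdiff hTX (le_refl _)
    · rw [card_sdiff_of_subset hYT, hTc]; omega
  · intro W hW
    simp only [mem_powersetCard] at hW
    obtain ⟨hWX, hWc⟩ := hW
    have hdisj : Disjoint W Y := (sdiff_disjoint.mono_left hWX)
    simp only [mem_filter, mem_powersetCard]
    refine ⟨⟨union_subset (hWX.trans sdiff_subset) hYX, ?_⟩, subset_union_right⟩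
    rw [card_union_of_disjoint hdisj, hWc]; omega
  · intro T hT
    simp only [mem_filter, mem_powersetCard] at hT
    exact sdiff_union_of_subset hT.2
  · intro W hW
    simp only [mem_powersetCard] at hW
    have hdisj : Disjoint W Y := (sdiff_disjoint.mono_left hW.1)
    rw [union_sdiff_right, sdiff_eq_self_of_disjoint hdisj]

variable (v u t lam : ℕ) (B : ι → Finset V)

lemma rw_doublecount (hv : Fintype.card V = v) (huni : ∀ i, (B i).card = u)
    (hdes : ∀ T : Finset V, T.card = t → (univ.filter fun i => T ⊆ B i).card = lam)
    {Y : Finset V} {a : ℕ} (hY : Y.card = a) (hat : a ≤ t) :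
    (univ.filter fun i => Y ⊆ B i).card * (u - a).choose (t - a)
      = lam * (v - a).choose (t - a) := by
  have key : ∑ i ∈ (univ : Finset ι), ∑ T ∈ (univ : Finset V).powersetCard t,
        (if Y ⊆ T ∧ T ⊆ B i then 1 else 0)
      = ∑ T ∈ (univ : Finset V).powersetCard t, ∑ i ∈ (univ : Finset ι),
        (if Y ⊆ T ∧ T ⊆ B i then 1 else 0) := Finset.sum_comm
  have lhs : ∑ i ∈ (univ : Finset ι), ∑ T ∈ (univ : Finset V).powersetCard t,
        (if Y ⊆ T ∧ T ⊆ B i then 1 else 0)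
      = (univ.filter fun i => Y ⊆ B i).card * (u - a).choose (t - a) := by
    rw [card_filter, Finset.sum_mul]
    apply Finset.sum_congr rfl
    intro i _
    rw [← card_filter]
    by_cases hYB : Y ⊆ B i
    · have h1 : ((univ : Finset V).powersetCard t).filter (fun T => Y ⊆ T ∧ T ⊆ B i)
          = ((B i).powersetCard t).filter (fun T => Y ⊆ T) := by
        ext T
        simp only [mem_filter, mem_powersetCard, subset_univ, true_and]
        tauto
      rw [h1, if_pos hYB, one_mul]
      have h2 := rw_sandwich (B i) Y hYB (t - a)
      rwa [hY, Nat.add_sub_cancel' hat, huni i] at h2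
    · have h1 : ((univ : Finset V).powersetCard t).filter (fun T => Y ⊆ T ∧ T ⊆ B i)
          = ∅ := by
        apply Finset.filter_false_of_mem
        intro T hT hc
        exact hYB (hc.1.trans hc.2)
      rw [h1, if_neg hYB, card_empty, zero_mul]
  have rhs : ∑ T ∈ (univ : Finset V).powersetCard t, ∑ i ∈ (univ : Finset ι),
        (if Y ⊆ T ∧ T ⊆ B i then 1 else 0)
      = lam * (v - a).choose (t - a) := by
    have h1 : ∀ T ∈ (univ : Finset V).powersetCard t,
        ∑ i ∈ (univ : Finset ι), (if Y ⊆ T ∧ T ⊆ B i then 1 else 0)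
          = if Y ⊆ T then lam else 0 := by
      intro T hT
      simp only [mem_powersetCard] at hT
      by_cases hYT : Y ⊆ T
      · rw [if_pos hYT, ← hdes T hT.2, card_filter]
        apply Finset.sum_congr rfl
        intro i _
        simp [hYT]
      · rw [if_neg hYT]
        apply Finset.sum_eq_zero
        intro i _
        simp [hYT]
    rw [Finset.sum_congr rfl h1, ← Finset.sum_filter, Finset.sum_const, smul_eq_mul]
    have h2 := rw_sandwich (univ : Finset V) Y (subset_univ Y) (t - a)
    rw [hY, Nat.add_sub_cancel' hat, card_univ, hv] at h2
    rw [h2, mul_comm]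
  rw [← lhs, key, rhs]

/-- number of blocks containing `Y` and disjoint from `Z` -/
def rwCnt (B : ι → Finset V) (Y Z : Finset V) : ℕ :=
  (univ.filter fun i => Y ⊆ B i ∧ Disjoint Z (B i)).card

lemma rwCnt_empty (Y : Finset V) :
    rwCnt B Y ∅ = (univ.filter fun i => Y ⊆ B i).card := by
  simp [rwCnt]

lemma rwCnt_split (Y Z : Finset V) (z : V) :
    rwCnt B Y (insert z Z) + rwCnt B (insert z Y) Z = rwCnt B Y Z := by
  unfold rwCnt
  rw [← Finset.card_filter_add_card_filter_not (s := univ.filter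
    fun i => Y ⊆ B i ∧ Disjoint Z (B i)) (p := fun i => z ∈ B i), add_comm]
  congr 1 <;> rw [Finset.filter_filter] <;>
    refine congrArg Finset.card (Finset.filter_congr fun i _ => ?_) <;>
    simp only [Finset.insert_subset_iff, Finset.disjoint_insert_left] <;> tauto

lemma rwCnt_const (hv : Fintype.card V = v) (huni : ∀ i, (B i).card = u)
    (hdes : ∀ T : Finset V, T.card = t → (univ.filter fun i => T ⊆ B i).card = lam)
    (htu : t ≤ u) :
    ∀ c a (Y Z Y' Z' : Finset V), a + c ≤ t → Y.card = a → Z.card = c →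
      Y'.card = a → Z'.card = c → Disjoint Y Z → Disjoint Y' Z' →
      rwCnt B Y Z = rwCnt B Y' Z' := by
  intro c
  induction c with
  | zero =>
    intro a Y Z Y' Z' hac hY hZ hY' hZ' _ _
    rw [Finset.card_eq_zero] at hZ hZ'
    subst hZ hZ'
    rw [rwCnt_empty, rwCnt_empty]
    have h1 := rw_doublecount v u t lam B hv huni hdes hY (by omega)
    have h2 := rw_doublecount v u t lam B hv huni hdes hY' (by omega)
    have hpos : 0 < (u - a).choose (t - a) := Nat.choose_pos (by omega)
    exact Nat.eq_of_mul_eq_mul_right hpos (h1.trans h2.symm)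
  | succ c ih =>
    intro a Y Z Y' Z' hac hY hZ hY' hZ' hd hd'
    obtain ⟨z, hz⟩ := Finset.card_pos.mp (by omega : 0 < Z.card)
    obtain ⟨z', hz'⟩ := Finset.card_pos.mp (by omega : 0 < Z'.card)
    have hZe : insert z (Z.erase z) = Z := Finset.insert_erase hz
    have hZe' : insert z' (Z'.erase z') = Z' := Finset.insert_erase hz'
    have e1 := rwCnt_split B Y (Z.erase z) z
    have e2 := rwCnt_split B Y' (Z'.erase z') z'
    rw [hZe] at e1
    rw [hZe'] at e2
    have hcz : (Z.erase z).card = c := by rw [Finset.card_erase_of_mem hz]; omega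
    have hcz' : (Z'.erase z').card = c := by rw [Finset.card_erase_of_mem hz']; omega
    have hzY : z ∉ Y := fun h => (Finset.disjoint_left.mp hd h) hz
    have hzY' : z' ∉ Y' := fun h => (Finset.disjoint_left.mp hd' h) hz'
    have i1 : rwCnt B Y (Z.erase z) = rwCnt B Y' (Z'.erase z') :=
      ih a Y _ Y' _ (by omega) hY hcz hY' hcz'
        (hd.mono_right (Finset.erase_subset _ _)) (hd'.mono_right (Finset.erase_subset _ _))
    have i2 : rwCnt B (insert z Y) (Z.erase z) = rwCnt B (insert z' Y') (Z'.erase z') :=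
      ih (a+1) _ _ _ _ (by omega) (by rw [Finset.card_insert_of_notMem hzY, hY]) hcz
        (by rw [Finset.card_insert_of_notMem hzY', hY']) hcz'
        (Finset.disjoint_insert_left.mpr
          ⟨Finset.notMem_erase z Z, hd.mono_right (Finset.erase_subset _ _)⟩)
        (Finset.disjoint_insert_left.mpr
          ⟨Finset.notMem_erase z' Z', hd'.mono_right (Finset.erase_subset _ _)⟩)
    omega

lemma rwCnt_pos (hv : Fintype.card V = v) (huni : ∀ i, (B i).card = u)
    (hdes : ∀ T : Finset V, T.card = t → (univ.filter fun i => T ⊆ B i).card = lam)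
    (htu : t ≤ u) (huv : u ≤ v) (hlam : 1 ≤ lam)
    {s : ℕ} (hs1 : 2 * s ≤ t) (hs2 : s ≤ v - u)
    {Y Z : Finset V} (hY : Y.card = s) (hZ : Z.card = s) (hd : Disjoint Y Z) :
    0 < rwCnt B Y Z := by
  have h1 := rw_doublecount v u t lam B hv huni hdes hY (by omega)
  have hpos : 0 < lam * (v - s).choose (t - s) :=
    Nat.mul_pos (by omega) (Nat.choose_pos (by omega))
  rw [← h1] at hpos
  have hfil : 0 < (univ.filter fun i => Y ⊆ B i).card := by
    rcases Nat.eq_zero_or_pos (univ.filter fun i => Y ⊆ B i).card with h | h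
    · rw [h, zero_mul] at hpos; exact absurd hpos (lt_irrefl 0)
    · exact h
  obtain ⟨i0, hi0⟩ := Finset.card_pos.mp hfil
  rw [Finset.mem_filter] at hi0
  have hi0' : Y ⊆ B i0 := hi0.2
  have hcompl : (univ \ B i0).card = v - u := by
    rw [Finset.card_sdiff_of_subset (subset_univ _), card_univ, hv, huni i0]
  obtain ⟨Z', hZ'sub, hZ'card⟩ := Finset.exists_subset_card_eq
    (show s ≤ (univ \ B i0).card by rw [hcompl]; exact hs2)
  have hd2 : Disjoint Y Z' := Finset.disjoint_left.mpr fun {x} hx hx' =>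
    (Finset.mem_sdiff.mp (hZ'sub hx')).2 (hi0' hx)
  have hZ'B : Disjoint Z' (B i0) := Finset.disjoint_left.mpr fun {x} hx hx' =>
    (Finset.mem_sdiff.mp (hZ'sub hx)).2 hx'
  have hpos2 : 0 < rwCnt B Y Z' := by
    apply Finset.card_pos.mpr
    exact ⟨i0, Finset.mem_filter.mpr ⟨Finset.mem_univ i0, hi0', hZ'B⟩⟩
  have := rwCnt_const v u t lam B hv huni hdes htu s s Y Z Y Z' (by omega)
    hY hZ hY hZ'card hd hd2
  omega

lemma rw_fiber (A D : Finset V) :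
    (univ.filter fun i => A ⊆ B i).card
      = ∑ W ∈ D.powerset, rwCnt B (A ∪ W) (D \ W) := by
  rw [Finset.card_eq_sum_card_fiberwise (f := fun i => D ∩ B i)
    (t := D.powerset) (fun i _ => Finset.mem_powerset.mpr inter_subset_left)]
  apply Finset.sum_congr rfl
  intro W hW
  rw [Finset.mem_powerset] at hW
  rw [Finset.filter_filter]
  refine congrArg Finset.card (Finset.filter_congr fun i _ => ?_)
  constructor
  · rintro ⟨hA, hDW⟩
    refine ⟨union_subset hA (hDW ▸ inter_subset_right), ?_⟩
    rw [Finset.disjoint_left]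
    intro x hx hxB
    rw [Finset.mem_sdiff] at hx
    exact hx.2 (hDW ▸ Finset.mem_inter.mpr ⟨hx.1, hxB⟩)
  · rintro ⟨hAW, hdisj⟩
    have hA : A ⊆ B i := (subset_union_left).trans hAW
    refine ⟨hA, Finset.Subset.antisymm ?_ ?_⟩
    · intro x hx
      rw [Finset.mem_inter] at hx
      by_contra hxW
      exact (Finset.disjoint_left.mp hdisj (Finset.mem_sdiff.mpr ⟨hx.1, hxW⟩)) hx.2
    · intro x hx
      exact Finset.mem_inter.mpr ⟨hW hx, hAW (Finset.mem_union_right _ hx)⟩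

end RWaux

/-- Ray-Chaudhuri–Wilson: a `t-(v,u,λ)` design with `b` blocks satisfies
`b ≥ C(v,s)` for every `s ≤ min(t/2, v−u)`. -/
theorem stmt_6 {V ι : Type*} [Fintype V] [Fintype ι]
    (v u t lam b s : ℕ) (hv : Fintype.card V = v) (hb : Fintype.card ι = b)
    (B : ι → Finset V) (huni : ∀ i, (B i).card = u)
    (htu : t ≤ u) (huv : u ≤ v) (hlam : 1 ≤ lam)
    (hdesign : ∀ T : Finset V, T.card = t → Nat.card {i : ι // T ⊆ B i} = lam)
    (hs1 : 2 * s ≤ t) (hs2 : s ≤ v - u) :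
    Nat.choose v s ≤ b := by
  classical
  have hdes : ∀ T : Finset V, T.card = t →
      (univ.filter fun i => T ⊆ B i).card = lam := by
    intro T hT
    have h := hdesign T hT
    rwa [Nat.card_eq_fintype_card, Fintype.card_subtype] at h
  -- canonical representatives
  obtain ⟨E, hEsub, hEcard⟩ := Finset.exists_subset_card_eq
    (show 2 * s ≤ (univ : Finset V).card by rw [card_univ, hv]; omega)
  have hZfex : ∀ j : ℕ, ∃ Zj : Finset V, j ≤ s → Zj ⊆ E ∧ Zj.card = j := by
    intro j
    by_cases h : j ≤ s
    · obtain ⟨Zj, h1, h2⟩ := Finset.exists_subset_card_eq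
        (show j ≤ E.card by rw [hEcard]; omega)
      exact ⟨Zj, fun _ => ⟨h1, h2⟩⟩
    · exact ⟨∅, fun hj => absurd hj h⟩
  choose Zf hZf using hZfex
  set q : ℕ → ℕ := fun j => rwCnt B (E \ Zf j) (Zf j) with hqdef
  have hEZ : ∀ j, j ≤ s → (E \ Zf j).card = 2 * s - j := by
    intro j hj
    rw [card_sdiff_of_subset (hZf j hj).1, hEcard, (hZf j hj).2]
  have hconst := rwCnt_const v u t lam B hv huni hdes htu
  have hq_eq : ∀ j, j ≤ s → ∀ Y Z : Finset V, Y.card = 2 * s - j → Z.card = j →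
      Disjoint Y Z → rwCnt B Y Z = q j := by
    intro j hj Y Z hY hZ hd
    exact hconst j (2 * s - j) Y Z (E \ Zf j) (Zf j) (by omega) hY hZ (hEZ j hj)
      (hZf j hj).2 hd sdiff_disjoint
  have hqs : 0 < q s := by
    refine rwCnt_pos v u t lam B hv huni hdes htu huv hlam hs1 hs2
      ?_ (hZf s le_rfl).2 sdiff_disjoint
    rw [hEZ s le_rfl]; omega
  -- key identity
  have key : ∀ S ∈ (univ : Finset V).powersetCard s,
      ∀ T ∈ (univ : Finset V).powersetCard s,
      (univ.filter fun i => S ∪ T ⊆ B i).card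
        = ∑ W ∈ (S ∩ T).powerset, q W.card := by
    intro S hS T hT
    rw [mem_powersetCard] at hS hT
    set m := (S ∩ T).card with hm
    have hms : m ≤ s := by
      rw [hm, ← hS.2]; exact card_le_card inter_subset_left
    have hA : (S ∪ T).card = 2 * s - m := by
      have hui := Finset.card_union_add_card_inter S T
      rw [hS.2, hT.2, ← hm] at hui
      omega
    obtain ⟨D, hDsub, hDcard⟩ := Finset.exists_subset_card_eq
      (show m ≤ ((univ : Finset V) \ (S ∪ T)).card by
        rw [card_sdiff_of_subset (subset_univ _), card_univ, hv, hA]; omega)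
    have hDdisj : Disjoint D (S ∪ T) := Finset.disjoint_left.mpr fun {x} hx =>
      (Finset.mem_sdiff.mp (hDsub hx)).2
    rw [rw_fiber B (S ∪ T) D]
    have step : ∀ W ∈ D.powerset, rwCnt B ((S ∪ T) ∪ W) (D \ W) = q (m - W.card) := by
      intro W hW
      rw [Finset.mem_powerset] at hW
      have hWm : W.card ≤ m := hDcard ▸ card_le_card hW
      apply hq_eq (m - W.card) (by omega)
      · rw [card_union_of_disjoint ((hDdisj.mono_left hW).symm)]
        rw [hA]
        omega
      · rw [card_sdiff_of_subset hW, hDcard]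
      · exact Finset.disjoint_union_left.mpr
          ⟨hDdisj.symm.mono_right sdiff_subset, sdiff_disjoint.symm⟩
    rw [Finset.sum_congr rfl step]
    have lhs_eq : ∑ W ∈ D.powerset, q (m - W.card)
        = ∑ j ∈ Finset.range (m + 1), m.choose j • q (m - j) := by
      rw [Finset.sum_powerset, hDcard]
      exact Finset.sum_congr rfl fun j _ => by
        rw [Finset.sum_powersetCard j D (fun k => q (m - k)), hDcard]
    have rhs_eq : ∑ W ∈ (S ∩ T).powerset, q W.card
        = ∑ j ∈ Finset.range (m + 1), m.choose j • q j := by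
      rw [Finset.sum_powerset, ← hm]
      exact Finset.sum_congr rfl fun j _ => by
        rw [Finset.sum_powersetCard j (S ∩ T) q, ← hm]
    rw [lhs_eq, rhs_eq, ← Finset.sum_range_reflect (fun j => m.choose j • q j) (m + 1)]
    apply Finset.sum_congr rfl
    intro j hj
    rw [Finset.mem_range] at hj
    have hjm : j ≤ m := by omega
    simp only [Nat.add_sub_cancel]
    rw [Nat.choose_symm hjm]
  -- linear independence
  set P := (univ : Finset V).powersetCard s with hP
  set e : Finset V → ι → ℚ := fun S i => if S ⊆ B i then 1 else 0 with he
  have hLI : LinearIndependent ℚ (fun x : {S : Finset V // S ∈ P} => e x.val) := by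
    rw [Fintype.linearIndependent_iff]
    intro g hg
    set G : Finset V → ℚ := fun S => if h : S ∈ P then g ⟨S, h⟩ else 0 with hG
    have hGg : ∀ x : {S : Finset V // S ∈ P}, G x.val = g x := by
      intro x; rw [hG]; simp only [x.2, dif_pos]
    have hg' : ∀ i : ι, ∑ S ∈ P, G S * e S i = 0 := by
      intro i
      have h := congrFun hg i
      simp only [Finset.sum_apply, Pi.smul_apply, smul_eq_mul, Pi.zero_apply] at h
      rw [← Finset.sum_coe_sort P (fun S => G S * e S i)]
      rw [Finset.sum_congr rfl fun x _ => by rw [hGg x]]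
      exact h
    have main : ∀ S ∈ P, G S = 0 := by
      have hzero : (0 : ℚ) = ∑ W ∈ (univ : Finset V).powerset,
          (q W.card : ℚ) * (∑ S ∈ P, if W ⊆ S then G S else 0) ^ 2 := by
        have c1 : (0 : ℚ) = ∑ i : ι, (∑ S ∈ P, G S * e S i) ^ 2 := by
          rw [Finset.sum_congr rfl fun i _ => by rw [hg' i]]
          simp
        have c2 : ∀ i : ι, (∑ S ∈ P, G S * e S i) ^ 2
            = ∑ S ∈ P, ∑ T ∈ P, (G S * e S i) * (G T * e T i) := by
          intro i
          rw [sq, Finset.sum_mul_sum]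
        have c3 : ∑ i : ι, (∑ S ∈ P, G S * e S i) ^ 2
            = ∑ S ∈ P, ∑ T ∈ P, G S * G T *
                ((univ.filter fun i => S ∪ T ⊆ B i).card : ℚ) := by
          rw [Finset.sum_congr rfl fun i _ => c2 i]
          rw [Finset.sum_comm]
          apply Finset.sum_congr rfl
          intro S _
          rw [Finset.sum_comm]
          apply Finset.sum_congr rfl
          intro T _
          have : ∀ i : ι, (G S * e S i) * (G T * e T i)
              = G S * G T * (if S ∪ T ⊆ B i then (1 : ℚ) else 0) := by
            intro i
            rw [he]
            simp only [Finset.union_subset_iff]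
            by_cases h1 : S ⊆ B i <;> by_cases h2 : T ⊆ B i <;>
              simp [h1, h2] <;> ring
          rw [Finset.sum_congr rfl fun i _ => this i, ← Finset.mul_sum,
            Finset.sum_boole]
        have c5 : ∀ S ∈ P, ∀ T ∈ P,
            ((univ.filter fun i => S ∪ T ⊆ B i).card : ℚ)
              = ∑ W ∈ (univ : Finset V).powerset,
                  if W ⊆ S ∩ T then (q W.card : ℚ) else 0 := by
          intro S hS T hT
          rw [key S hS T hT, Nat.cast_sum]
          rw [← Finset.sum_filter]
          congr 1
          ext W
          simp only [Finset.mem_powerset, Finset.mem_filter, subset_univ, true_and]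
        have hpt : ∀ S T W : Finset V,
            G S * G T * (if W ⊆ S ∩ T then (q W.card : ℚ) else 0)
              = (q W.card : ℚ) * ((if W ⊆ S then G S else 0) *
                  (if W ⊆ T then G T else 0)) := by
          intro S T W
          simp only [Finset.subset_inter_iff]
          by_cases h1 : W ⊆ S <;> by_cases h2 : W ⊆ T <;>
            simp [h1, h2] <;> ring
        have c6a : ∀ S ∈ P, ∀ T ∈ P, G S * G T *
              ((univ.filter fun i => S ∪ T ⊆ B i).card : ℚ)
            = ∑ W ∈ (univ : Finset V).powerset, (q W.card : ℚ) *
                ((if W ⊆ S then G S else 0) * (if W ⊆ T then G T else 0)) := by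
          intro S hS T hT
          rw [c5 S hS T hT, Finset.mul_sum]
          exact Finset.sum_congr rfl fun W _ => hpt S T W
        have c6 : ∑ S ∈ P, ∑ T ∈ P, G S * G T *
              ((univ.filter fun i => S ∪ T ⊆ B i).card : ℚ)
            = ∑ W ∈ (univ : Finset V).powerset,
                (q W.card : ℚ) * (∑ S ∈ P, if W ⊆ S then G S else 0) ^ 2 := by
          calc ∑ S ∈ P, ∑ T ∈ P, G S * G T *
              ((univ.filter fun i => S ∪ T ⊆ B i).card : ℚ)
              = ∑ S ∈ P, ∑ T ∈ P, ∑ W ∈ (univ : Finset V).powerset,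
                  (q W.card : ℚ) * ((if W ⊆ S then G S else 0) *
                    (if W ⊆ T then G T else 0)) :=
                Finset.sum_congr rfl fun S hS =>
                  Finset.sum_congr rfl fun T hT => c6a S hS T hT
            _ = ∑ S ∈ P, ∑ W ∈ (univ : Finset V).powerset, ∑ T ∈ P,
                  (q W.card : ℚ) * ((if W ⊆ S then G S else 0) *
                    (if W ⊆ T then G T else 0)) :=
                Finset.sum_congr rfl fun S _ => Finset.sum_comm
            _ = ∑ W ∈ (univ : Finset V).powerset, ∑ S ∈ P, ∑ T ∈ P,
                  (q W.card : ℚ) * ((if W ⊆ S then G S else 0) *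
                    (if W ⊆ T then G T else 0)) := Finset.sum_comm
            _ = ∑ W ∈ (univ : Finset V).powerset,
                (q W.card : ℚ) * (∑ S ∈ P, if W ⊆ S then G S else 0) ^ 2 := by
                apply Finset.sum_congr rfl
                intro W _
                rw [sq, Finset.sum_mul_sum, Finset.mul_sum]
                exact Finset.sum_congr rfl fun S _ => (Finset.mul_sum _ _ _).symm
        exact c1.trans (c3.trans c6)
      have hterms : ∀ W ∈ (univ : Finset V).powerset,
          (q W.card : ℚ) * (∑ S ∈ P, if W ⊆ S then G S else 0) ^ 2 = 0 := by
        have := (Finset.sum_eq_zero_iff_of_nonneg (fun W _ =>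
          mul_nonneg (Nat.cast_nonneg _) (sq_nonneg _))).mp hzero.symm
        exact this
      intro S hS
      have hScard : S.card = s := (mem_powersetCard.mp hS).2
      have hterm := hterms S (Finset.mem_powerset.mpr (subset_univ S))
      have hHS : ∑ T ∈ P, (if S ⊆ T then G T else 0) = G S := by
        rw [Finset.sum_eq_single_of_mem S hS]
        · simp
        · intro T hT hne
          rw [if_neg]
          intro hsub
          have hTcard : T.card = s := (mem_powersetCard.mp hT).2
          exact hne (Finset.eq_of_subset_of_card_le hsub (by omega)).symm
      rw [hHS, hScard] at hterm
      have hqne : (q s : ℚ) ≠ 0 := Nat.cast_ne_zero.mpr (by omega)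
      have := (mul_eq_zero.mp hterm).resolve_left hqne
      exact pow_eq_zero_iff (by norm_num) |>.mp this
    intro x
    rw [← hGg x]
    exact main x.val x.2
  have hcard := hLI.fintype_card_le_finrank
  rw [Module.finrank_pi ℚ, hb] at hcard
  have hPcard : Fintype.card {S : Finset V // S ∈ P} = Nat.choose v s := by
    rw [Fintype.card_coe, hP, Finset.card_powersetCard, card_univ, hv]
  omega
end

section
/- Let X = (V₁, V₂; A) be a nonempty, non-complete semiregular bipartite graph. Then no twin class in V₁ has more than |V₁|/2 elements, where two vertices x,y ∈ V₁ are twins if they have exactly the same neighborhood in V₂. -/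
/-- In a nonempty, non-complete semiregular bipartite graph `(V₁,V₂;A)`, no
twin class in `V₁` has more than `|V₁|/2` elements. -/
theorem stmt_7 {V₁ V₂ : Type*} [Fintype V₁] [Fintype V₂]
    (A : V₁ → V₂ → Prop)
    (hne : ∃ x y, A x y) (hnc : ∃ x y, ¬ A x y)
    (hsemi₁ : ∃ d₁, ∀ x : V₁, Nat.card {y : V₂ // A x y} = d₁)
    (hsemi₂ : ∃ d₂, ∀ y : V₂, Nat.card {x : V₁ // A x y} = d₂) :
    ∀ x : V₁, 2 * Nat.card {x' : V₁ // ∀ y, A x' y ↔ A x y} ≤ Fintype.card V₁ := by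
  classical
  obtain ⟨d₁, h₁⟩ := hsemi₁
  obtain ⟨d₂, h₂⟩ := hsemi₂
  intro x
  obtain ⟨x₀, y₀, hxy⟩ := hne
  obtain ⟨x₁, y₁, hxy'⟩ := hnc
  have hd₁pos : 0 < d₁ := by
    rw [← h₁ x₀]
    have : Nonempty {y // A x₀ y} := ⟨⟨y₀, hxy⟩⟩
    exact Nat.card_pos
  have hy : ∃ y, A x y := by
    by_contra h
    push_neg at h
    have h0 : Nat.card {y // A x y} = 0 := by
      have : IsEmpty {y // A x y} := ⟨fun z => h z.1 z.2⟩
      simp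
    rw [h₁ x] at h0
    omega
  have hy' : ∃ y, ¬ A x y := by
    by_contra h
    push_neg at h
    have hcard : d₁ = Fintype.card V₂ := by
      rw [← h₁ x, Nat.card_congr (Equiv.subtypeUnivEquiv h), Nat.card_eq_fintype_card]
    have hfull : Fintype.card {y // A x₁ y} = Fintype.card V₂ := by
      rw [← Nat.card_eq_fintype_card, h₁ x₁, hcard]
    have hlt : Fintype.card {y // A x₁ y} < Fintype.card V₂ :=
      Fintype.card_subtype_lt (p := fun y => A x₁ y) (x := y₁) hxy'
    omega
  obtain ⟨ya, hya⟩ := hy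
  obtain ⟨yb, hyb⟩ := hy'
  have hT1 : Nat.card {x' // ∀ y, A x' y ↔ A x y} ≤ d₂ := by
    rw [← h₂ ya]
    exact Nat.card_le_card_of_injective
      (fun z => ⟨z.1, (z.2 ya).2 hya⟩)
      (fun a b hab => by simpa [Subtype.ext_iff] using hab)
  have hT2 : d₂ ≤ Nat.card {x' // ¬ ∀ y, A x' y ↔ A x y} := by
    rw [← h₂ yb]
    exact Nat.card_le_card_of_injective
      (fun z => ⟨z.1, fun hz => hyb ((hz yb).1 z.2)⟩)
      (fun a b hab => by simpa [Subtype.ext_iff] using hab)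
  have hsum : Nat.card {x' // ∀ y, A x' y ↔ A x y}
      + Nat.card {x' // ¬ ∀ y, A x' y ↔ A x y} = Fintype.card V₁ := by
    rw [Nat.card_eq_fintype_card, Nat.card_eq_fintype_card,
      Fintype.card_subtype_compl]
    have := Fintype.card_subtype_le (fun x' : V₁ => ∀ y, A x' y ↔ A x y)
    omega
  omega
end

section
/- Let (V₁,V₂;A) be a bipartite graph with no pair of twins in V₁ (with respect to V₂). Let V₂ = C₁ ∪ C₂ be a partition. Then for at least one i ∈ {1,2}, the bipartite graph (V₁, C_i; A ∩ (V₁ × C_i)) has no twin class in V₁ of size ≥ |V₁|/2 + 1. -/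
/-- If `(V₁,V₂;A)` has no twins in `V₁` and `V₂ = C₁ ⊔ C₂`, then for at least
one `i`, the graph `(V₁, C_i; A)` has no twin class in `V₁` of size
`≥ |V₁|/2 + 1`. -/
theorem stmt_8 {V₁ V₂ : Type*} [Fintype V₁] [Fintype V₂]
    (A : V₁ → V₂ → Prop)
    (hnotwins : ∀ x y : V₁, (∀ z, A x z ↔ A y z) → x = y)
    (C₁ C₂ : Set V₂) (hdisj : Disjoint C₁ C₂) (hunion : C₁ ∪ C₂ = Set.univ) :
    (∀ x : V₁,
      2 * Nat.card {x' : V₁ // ∀ z ∈ C₁, (A x' z ↔ A x z)} < Fintype.card V₁ + 2) ∨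
    (∀ x : V₁,
      2 * Nat.card {x' : V₁ // ∀ z ∈ C₂, (A x' z ↔ A x z)} < Fintype.card V₁ + 2) := by
  by_contra h
  push_neg at h
  obtain ⟨⟨x₁, h₁⟩, ⟨x₂, h₂⟩⟩ := h
  set S₁ : Set V₁ := {x' | ∀ z ∈ C₁, (A x' z ↔ A x₁ z)} with hS₁
  set S₂ : Set V₁ := {x' | ∀ z ∈ C₂, (A x' z ↔ A x₂ z)} with hS₂
  have hc₁ : Nat.card {x' : V₁ // ∀ z ∈ C₁, (A x' z ↔ A x₁ z)} = S₁.ncard := by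
    rw [hS₁, ← Nat.card_coe_set_eq]; rfl
  have hc₂ : Nat.card {x' : V₁ // ∀ z ∈ C₂, (A x' z ↔ A x₂ z)} = S₂.ncard := by
    rw [hS₂, ← Nat.card_coe_set_eq]; rfl
  rw [hc₁] at h₁
  rw [hc₂] at h₂
  have hsub : (S₁ ∩ S₂).Subsingleton := by
    rintro a ⟨ha1, ha2⟩ b ⟨hb1, hb2⟩
    apply hnotwins
    intro z
    have hz : z ∈ C₁ ∪ C₂ := hunion ▸ Set.mem_univ z
    rcases hz with hz | hz
    · exact (ha1 z hz).trans (hb1 z hz).symm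
    · exact (ha2 z hz).trans (hb2 z hz).symm
  have hinter : (S₁ ∩ S₂).ncard ≤ 1 := by
    rcases hsub.eq_empty_or_singleton with he | ⟨a, he⟩ <;> simp [he]
  have hunionle : (S₁ ∪ S₂).ncard ≤ Fintype.card V₁ := by
    rw [← Nat.card_eq_fintype_card, ← Set.ncard_univ]
    exact Set.ncard_le_ncard (Set.subset_univ _) Set.finite_univ
  have key := Set.ncard_union_add_ncard_inter S₁ S₂ (Set.toFinite _) (Set.toFinite _)
  omega
end

section
/- No large trivial substructure: let (Γ,c) be a classical coherent configuration with unique vertex color (homogeneous) that is not a clique. Then there is no subset B ⊆ Γ with |B| > |Γ|/2 such that all off-diagonal pairs in B² have the same color. -/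
/-- No large trivial substructure: a homogeneous classical coherent
configuration that is not a clique has no subset `B` with `|B| > |Γ|/2` on
which all off-diagonal pairs have the same color. -/
theorem stmt_14 {Γ 𝒞 : Type*} [Fintype Γ] (c : Γ → Γ → 𝒞)
    (hdiag : ∀ x y x' y' : Γ, c x y = c x' y' → (x = y ↔ x' = y'))
    (hsymm : ∀ x y x' y' : Γ, c x y = c x' y' → c y x = c y' x')
    (hcoh : ∀ (r s : 𝒞) (x y x' y' : Γ), c x y = c x' y' →
      Nat.card {z : Γ // c x z = r ∧ c z y = s} =
        Nat.card {z : Γ // c x' z = r ∧ c z y' = s})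
    (hhom : ∀ x y : Γ, c x x = c y y)
    (hnotclique : ∃ x y x' y' : Γ, x ≠ y ∧ x' ≠ y' ∧ c x y ≠ c x' y') :
    ¬ ∃ B : Set Γ, 2 * B.ncard > Fintype.card Γ ∧
      ∀ x ∈ B, ∀ y ∈ B, ∀ x' ∈ B, ∀ y' ∈ B, x ≠ y → x' ≠ y' → c x y = c x' y' := by
  classical
  rintro ⟨B, hB, htriv⟩
  -- coherence in Finset form
  have key : ∀ (r s : 𝒞) (x y x' y' : Γ), c x y = c x' y' →
      (Finset.univ.filter fun z => c x z = r ∧ c z y = s).card =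
      (Finset.univ.filter fun z => c x' z = r ∧ c z y' = s).card := by
    intro r s x y x' y' h
    have h2 := hcoh r s x y x' y' h
    simpa [Nat.card_eq_fintype_card, Fintype.card_subtype] using h2
  obtain ⟨x1, y1, x2, y2, hxy1, hxy2, hne⟩ := hnotclique
  have hn2 : 2 ≤ Fintype.card Γ :=
    Fintype.one_lt_card_iff_nontrivial.mpr ⟨⟨x1, y1, hxy1⟩⟩
  set Bf : Finset Γ := B.toFinset with hBfdef
  have hBcard : B.ncard = Bf.card := Set.ncard_eq_toFinset_card' B
  rw [hBcard] at hB
  have hBf2 : 2 ≤ Bf.card := by omega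
  obtain ⟨a₀, ha₀, b₀, hb₀, hab⟩ := Finset.one_lt_card.mp hBf2
  have ha₀B : a₀ ∈ B := by simpa [hBfdef] using ha₀
  have hb₀B : b₀ ∈ B := by simpa [hBfdef] using hb₀
  set k := c a₀ b₀ with hk
  -- find an off-diagonal pair of color ≠ k
  obtain ⟨x₀, y₀, hx₀y₀, hmk⟩ : ∃ x y, x ≠ y ∧ c x y ≠ k := by
    by_cases h : c x1 y1 = k
    · exact ⟨x2, y2, hxy2, fun hh => hne (h.trans hh.symm)⟩
    · exact ⟨x1, y1, hxy1, h⟩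
  set m := c x₀ y₀ with hm
  set m' := c y₀ x₀ with hm'
  have hsym : ∀ u v, c u v = m → c v u = m' := fun u v h => hsymm u v x₀ y₀ h
  -- out-valency of m is constant
  have hf : ∀ u u', (Finset.univ.filter fun v => c u v = m).card
      = (Finset.univ.filter fun v => c u' v = m).card := by
    intro u u'
    have e1 : ∀ w : Γ, (Finset.univ.filter fun v => c w v = m)
        = (Finset.univ.filter fun v => c w v = m ∧ c v w = m') := by
      intro w
      apply Finset.filter_congr
      intro v _
      constructor
      · exact fun h => ⟨h, hsym w v h⟩
      · exact fun h => h.1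
    rw [e1 u, e1 u']
    exact key m m' u u u' u' (hhom u u')
  -- in-valency of m is constant
  have hg : ∀ v v', (Finset.univ.filter fun u => c u v = m).card
      = (Finset.univ.filter fun u => c u v' = m).card := by
    intro v v'
    have e1 : ∀ w : Γ, (Finset.univ.filter fun u => c u w = m)
        = (Finset.univ.filter fun u => c w u = m' ∧ c u w = m) := by
      intro w
      apply Finset.filter_congr
      intro u _
      constructor
      · exact fun h => ⟨hsym u w h, h⟩
      · exact fun h => h.2
    rw [e1 v, e1 v']
    exact key m' m v v v' v' (hhom v v')
  set e := (Finset.univ.filter fun v => c x₀ v = m).card with he_def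
  set e' := (Finset.univ.filter fun u => c u y₀ = m).card with he'_def
  have he : 1 ≤ e := by
    apply Finset.card_pos.mpr
    exact ⟨y₀, by simp [hm]⟩
  -- the set of all m-colored pairs
  set S := Finset.univ.filter (fun p : Γ × Γ => c p.1 p.2 = m) with hS_def
  -- row fibers
  have hrowfib : ∀ u : Γ, (S.filter fun p => p.1 = u).card = e := by
    intro u
    have himg : S.filter (fun p => p.1 = u)
        = (Finset.univ.filter fun v => c u v = m).image (fun v => (u, v)) := by
      ext ⟨p1, p2⟩
      simp only [hS_def, Finset.mem_filter, Finset.mem_univ, true_and,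
        Finset.mem_image, Prod.mk.injEq]
      constructor
      · rintro ⟨hc, rfl⟩
        exact ⟨p2, hc, rfl, rfl⟩
      · rintro ⟨v, hc, rfl, rfl⟩
        exact ⟨hc, rfl⟩
    rw [himg, Finset.card_image_of_injective _ (fun a b h => by simpa using h)]
    exact hf u x₀
  -- column fibers
  have hcolfib : ∀ v : Γ, (S.filter fun p => p.2 = v).card = e' := by
    intro v
    have himg : S.filter (fun p => p.2 = v)
        = (Finset.univ.filter fun u => c u v = m).image (fun u => (u, v)) := by
      ext ⟨p1, p2⟩
      simp only [hS_def, Finset.mem_filter, Finset.mem_univ, true_and,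
        Finset.mem_image, Prod.mk.injEq]
      constructor
      · rintro ⟨hc, rfl⟩
        exact ⟨p1, hc, rfl, rfl⟩
      · rintro ⟨u, hc, rfl, rfl⟩
        exact ⟨hc, rfl⟩
    rw [himg, Finset.card_image_of_injective _ (fun a b h => by simpa using h)]
    exact hg v y₀
  -- total count, two ways
  have hrow : S.card = Fintype.card Γ * e := by
    rw [Finset.card_eq_sum_card_fiberwise
      (f := fun p : Γ × Γ => p.1) (t := Finset.univ) (fun p _ => Finset.mem_univ _)]
    rw [Finset.sum_congr rfl (fun u _ => hrowfib u)]
    simp [Finset.sum_const, Finset.card_univ, Nat.mul_comm]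
  have hcol : S.card = Fintype.card Γ * e' := by
    rw [Finset.card_eq_sum_card_fiberwise
      (f := fun p : Γ × Γ => p.2) (t := Finset.univ) (fun p _ => Finset.mem_univ _)]
    rw [Finset.sum_congr rfl (fun v _ => hcolfib v)]
    simp [Finset.sum_const, Finset.card_univ, Nat.mul_comm]
  -- pairs with first / second coordinate in B
  set S1 := S.filter (fun p => p.1 ∈ B) with hS1_def
  set S2 := S.filter (fun p => p.2 ∈ B) with hS2_def
  have hS1card : S1.card = Bf.card * e := by
    rw [Finset.card_eq_sum_card_fiberwise
      (f := fun p : Γ × Γ => p.1) (t := Bf)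
      (fun p (hp : p ∈ S1) => by
        simp only [hS1_def, Finset.mem_filter] at hp
        simpa [hBfdef] using hp.2)]
    have hfib : ∀ u ∈ Bf, (S1.filter fun p => p.1 = u).card = e := by
      intro u hu
      have huB : u ∈ B := by simpa [hBfdef] using hu
      have : S1.filter (fun p => p.1 = u) = S.filter (fun p => p.1 = u) := by
        ext p
        simp only [hS1_def, Finset.mem_filter]
        constructor
        · rintro ⟨⟨h1, _⟩, h3⟩
          exact ⟨h1, h3⟩
        · rintro ⟨h1, h3⟩
          exact ⟨⟨h1, h3 ▸ huB⟩, h3⟩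
      rw [this, hrowfib u]
    rw [Finset.sum_congr rfl hfib]
    simp [Finset.sum_const, Nat.mul_comm]
  have hS2card : S2.card = Bf.card * e' := by
    rw [Finset.card_eq_sum_card_fiberwise
      (f := fun p : Γ × Γ => p.2) (t := Bf)
      (fun p (hp : p ∈ S2) => by
        simp only [hS2_def, Finset.mem_filter] at hp
        simpa [hBfdef] using hp.2)]
    have hfib : ∀ v ∈ Bf, (S2.filter fun p => p.2 = v).card = e' := by
      intro v hv
      have hvB : v ∈ B := by simpa [hBfdef] using hv
      have : S2.filter (fun p => p.2 = v) = S.filter (fun p => p.2 = v) := by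
        ext p
        simp only [hS2_def, Finset.mem_filter]
        constructor
        · rintro ⟨⟨h1, _⟩, h3⟩
          exact ⟨h1, h3⟩
        · rintro ⟨h1, h3⟩
          exact ⟨⟨h1, h3 ▸ hvB⟩, h3⟩
      rw [this, hcolfib v]
    rw [Finset.sum_congr rfl hfib]
    simp [Finset.sum_const, Nat.mul_comm]
  -- no m-pair lies entirely in B
  have hdisj : Disjoint S1 S2 := by
    rw [Finset.disjoint_left]
    intro p h1 h2
    simp only [hS1_def, hS2_def, hS_def, Finset.mem_filter, Finset.mem_univ,
      true_and] at h1 h2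
    obtain ⟨hcm, h1B⟩ := h1
    obtain ⟨_, h2B⟩ := h2
    by_cases hpq : p.1 = p.2
    · exact hx₀y₀ ((hdiag p.1 p.2 x₀ y₀ hcm).mp hpq)
    · exact hmk (hcm.symm.trans (htriv p.1 h1B p.2 h2B a₀ ha₀B b₀ hb₀B hpq hab))
  have hunion : S1.card + S2.card ≤ S.card := by
    rw [← Finset.card_union_of_disjoint hdisj]
    exact Finset.card_le_card
      (Finset.union_subset (Finset.filter_subset _ _) (Finset.filter_subset _ _))
  -- conclude
  have h1 : Bf.card * e + Bf.card * e' ≤ Fintype.card Γ * e := by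
    rw [← hS1card, ← hS2card, ← hrow]; exact hunion
  have h2 : Bf.card * e + Bf.card * e' ≤ Fintype.card Γ * e' := by
    rw [← hS1card, ← hS2card, ← hcol]; exact hunion
  nlinarith [he, hB]
end

section
/- Let (Γ,c) be a uniprimitive classical coherent configuration. Then for every edge color r, the complement graph 𝒢̄_r = {(x,y) : x ≠ y, c(x,y) ≠ r} has diameter exactly 2. -/
/-- In a uniprimitive classical coherent configuration, for every edge color
`r` the complement graph `𝒢̄_r` has diameter exactly `2`. -/
theorem stmt_15 {Γ 𝒞 : Type*} [Fintype Γ] (c : Γ → Γ → 𝒞)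
    (hdiag : ∀ x y x' y' : Γ, c x y = c x' y' → (x = y ↔ x' = y'))
    (hsymm : ∀ x y x' y' : Γ, c x y = c x' y' → c y x = c y' x')
    (hcoh : ∀ (r s : 𝒞) (x y x' y' : Γ), c x y = c x' y' →
      Nat.card {z : Γ // c x z = r ∧ c z y = s} =
        Nat.card {z : Γ // c x' z = r ∧ c z y' = s})
    (hhom : ∀ x y : Γ, c x x = c y y)
    (hconn : ∀ r : 𝒞, (∃ x y : Γ, x ≠ y ∧ c x y = r) →
      ∀ x y : Γ, Relation.ReflTransGen (fun a b => c a b = r ∨ c b a = r) x y)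
    (hnotclique : ∃ x y x' y' : Γ, x ≠ y ∧ x' ≠ y' ∧ c x y ≠ c x' y') :
    ∀ r : 𝒞, (∃ x y : Γ, x ≠ y ∧ c x y = r) →
      ((∀ x y : Γ, x ≠ y →
          (c x y ≠ r ∨ ∃ z : Γ, z ≠ x ∧ z ≠ y ∧ c x z ≠ r ∧ c z y ≠ r)) ∧
        ∃ x y : Γ, x ≠ y ∧ c x y = r) := by
  classical
  intro r hr
  obtain ⟨x, y, hxy, hcxy⟩ := hr
  refine ⟨?_, x, y, hxy, hcxy⟩
  intro a b hab
  by_cases hcab : c a b = r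
  · right
    by_contra hno
    push_neg at hno
    -- hno : ∀ z, z ≠ a → z ≠ b → c a z ≠ r → c z b = r
    have hcov : ∀ z, c a z = r ∨ c z b = r := by
      intro z
      by_cases hza : z = a
      · subst hza; exact Or.inr hcab
      by_cases hzb : z = b
      · subst hzb; exact Or.inl hcab
      by_cases h : c a z = r
      · exact Or.inl h
      · exact Or.inr (hno z hza hzb h)
    -- The covering property transfers to every r-edge by coherence.
    have cover_all : ∀ u v, c u v = r → ∀ z, c u z = r ∨ c z v = r := by
      intro u v huv
      by_contra hcon
      push_neg at hcon
      obtain ⟨z₀, h1, h2⟩ := hcon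
      have hc := hcoh (c u z₀) (c z₀ v) u v a b (huv.trans hcab.symm)
      have hpos : 0 < Nat.card {z : Γ // c u z = c u z₀ ∧ c z v = c z₀ v} := by
        have hne : Nonempty {z : Γ // c u z = c u z₀ ∧ c z v = c z₀ v} :=
          ⟨⟨z₀, rfl, rfl⟩⟩
        exact Nat.card_pos
      rw [hc] at hpos
      obtain ⟨⟨z₁, hz1, hz2⟩⟩ :
          Nonempty {z : Γ // c a z = c u z₀ ∧ c z b = c z₀ v} :=
        (Nat.card_pos_iff.mp hpos).1
      rcases hcov z₁ with h | h
      · exact h1 (hz1.symm.trans h)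
      · exact h2 (hz2.symm.trans h)
    -- symmetrized covering
    have coverR : ∀ u v, (c u v = r ∨ c v u = r) → ∀ z,
        (c u z = r ∨ c z u = r) ∨ (c z v = r ∨ c v z = r) := by
      intro u v huv z
      rcases huv with h | h
      · rcases cover_all u v h z with h' | h'
        · exact Or.inl (Or.inl h')
        · exact Or.inr (Or.inl h')
      · rcases cover_all v u h z with h' | h'
        · exact Or.inr (Or.inr h')
        · exact Or.inl (Or.inr h')
    by_cases hB : ∀ u w : Γ, u ≠ w → (c u w = r ∨ c w u = r)
    · -- "tournament" case: every pair is r-related in some direction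
      obtain ⟨x1, y1, x2, y2, h1, h2, hne12⟩ := hnotclique
      obtain ⟨p, q, hpq, hs⟩ : ∃ p q : Γ, p ≠ q ∧ c p q ≠ r := by
        by_cases h : c x1 y1 = r
        · exact ⟨x2, y2, h2, fun hh => hne12 (h.trans hh.symm)⟩
        · exact ⟨x1, y1, h1, h⟩
      have hr' : c b a ≠ r := by
        intro h
        have hqp : c q p = r := (hB q p hpq.symm).resolve_right hs
        have hpq' : c p q = c b a := hsymm q p a b (hqp.trans hcab.symm)
        exact hs (hpq'.trans h)
      have key : ∀ z, c z a = r → c z b = r := by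
        intro z hz
        rcases hcov z with h | h
        · exfalso
          have h' : c z a = c b a := hsymm a z a b (h.trans hcab.symm)
          exact hr' (h'.symm.trans hz)
        · exact h
      have hcard := hcoh (c b a) r a a b b (hhom a b)
      rw [Nat.card_eq_fintype_card, Nat.card_eq_fintype_card,
        Fintype.card_subtype, Fintype.card_subtype] at hcard
      have hsub : Finset.univ.filter (fun z => c a z = c b a ∧ c z a = r) ⊆
          Finset.univ.filter (fun z => c b z = c b a ∧ c z b = r) := by
        intro z hz
        simp only [Finset.mem_filter, Finset.mem_univ, true_and] at hz ⊢
        obtain ⟨hz1, hz2⟩ := hz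
        have h3 : c z b = r := key z hz2
        have h4 : c b z = c b a := hsymm z b a b (h3.trans hcab.symm)
        exact ⟨h4, h3⟩
      have hss : Finset.univ.filter (fun z => c a z = c b a ∧ c z a = r) ⊂
          Finset.univ.filter (fun z => c b z = c b a ∧ c z b = r) := by
        have hm1 : a ∈ Finset.univ.filter (fun z => c b z = c b a ∧ c z b = r) := by
          simp only [Finset.mem_filter, Finset.mem_univ, true_and]
          exact hcab
        have hm2 : a ∉ Finset.univ.filter (fun z => c a z = c b a ∧ c z a = r) := by
          simp only [Finset.mem_filter, Finset.mem_univ, true_and, not_and]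
          intro _ h
          exact absurd ((hdiag a a a b (h.trans hcab.symm)).mp rfl) hab
        exact (Finset.ssubset_iff_of_subset hsub).mpr ⟨a, hm1, hm2⟩
      have := Finset.card_lt_card hss
      omega
    · -- there is a pair not r-related in either direction
      push_neg at hB
      obtain ⟨p, q, hpq, hnR⟩ := hB
      have hspq : c p q ≠ r := hnR.1
      have hsqp : c q p ≠ r := hnR.2
      -- E is the "same class" relation; it is transitive
      have Etrans : ∀ u w t : Γ,
          (u = w ∨ ¬(c u w = r ∨ c w u = r)) →
          (w = t ∨ ¬(c w t = r ∨ c t w = r)) →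
          (u = t ∨ ¬(c u t = r ∨ c t u = r)) := by
        intro u w t h1 h2
        rcases h1 with rfl | h1
        · exact h2
        rcases h2 with rfl | h2
        · exact Or.inr h1
        by_cases hut : u = t
        · exact Or.inl hut
        right
        intro hRut
        rcases coverR u t hRut w with h | h
        · exact h1 h
        · exact h2 h
      -- every edge of color c p q (in either direction) stays within a class
      have stepE : ∀ α β : Γ, (c α β = c p q ∨ c β α = c p q) →
          (α = β ∨ ¬(c α β = r ∨ c β α = r)) := by
        intro α β hst
        by_cases hab' : α = β
        · exact Or.inl hab'
        right
        rcases hst with h | h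
        · rintro (h' | h')
          · exact hspq (h.symm.trans h')
          · exact hsqp ((hsymm p q α β h.symm).trans h')
        · rintro (h' | h')
          · exact hsqp ((hsymm p q β α h.symm).trans h')
          · exact hspq (h.symm.trans h')
      have hEgen : ∀ u v : Γ,
          Relation.ReflTransGen (fun α β => c α β = c p q ∨ c β α = c p q) u v →
          (u = v ∨ ¬(c u v = r ∨ c v u = r)) := by
        intro u v h
        induction h with
        | refl => exact Or.inl rfl
        | tail h1 h2 ih => exact Etrans _ _ _ ih (stepE _ _ h2)
      have hEab := hEgen a b (hconn (c p q) ⟨p, q, hpq, rfl⟩ a b)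
      rcases hEab with h | h
      · exact hab h
      · exact h (Or.inl hcab)
  · exact Or.inl hcab
end

section
/- Let G be a subgroup of Sym_s and N a normal subgroup of G such that G/N is simple. Then G/N is isomorphic to a subgroup of Sym_s. Consequently, every composition factor of a subgroup of Sym_s embeds in Sym_s. -/
open Equiv MulAction Pointwise

private lemma stmt_17_aux {s : ℕ} : ∀ n : ℕ, ∀ G : Subgroup (Equiv.Perm (Fin s)),
    Nat.card G ≤ n → ∀ (N : Subgroup G) [N.Normal] [IsSimpleGroup (G ⧸ N)],
    ∃ f : (G ⧸ N) →* Equiv.Perm (Fin s), Function.Injective f := by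
  intro n
  induction n with
  | zero =>
    intro G hG N _ _
    have := Nat.card_pos (α := ↥G)
    omega
  | succ n ih =>
    intro G hG N hNnormal hsimple
    haveI := hNnormal
    haveI := hsimple
    by_cases hbot : N = ⊥
    · subst hbot
      exact ⟨G.subtype.comp (QuotientGroup.quotientBot (G := ↥G)).toMonoidHom,
        G.subtype_injective.comp (QuotientGroup.quotientBot (G := ↥G)).injective⟩
    -- pick ν ∈ N, ν ≠ 1, and a point α moved by ν
    obtain ⟨ν, hν1⟩ := Subgroup.ne_bot_iff_exists_ne_one.mp hbot
    have hν1' : (ν : ↥G) ≠ 1 := by simpa using hν1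
    have hν1'' : ((ν : ↥G) : Equiv.Perm (Fin s)) ≠ 1 := by simpa using hν1'
    obtain ⟨α, hα⟩ : ∃ α : Fin s, ((ν : ↥G) : Equiv.Perm (Fin s)) α ≠ α := by
      by_contra h
      push_neg at h
      exact hν1'' (Equiv.ext h)
    -- the stabilizer H of α in G
    set H : Subgroup ↥G := MulAction.stabilizer ↥G α with hH
    have hνH : (ν : ↥G) ∉ H := fun hmem => hα hmem
    have hHtop : H ≠ ⊤ := fun h => hνH (h ▸ Subgroup.mem_top _)
    have hHindex : H.index ≤ s := by
      rw [hH, MulAction.index_stabilizer]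
      calc (MulAction.orbit ↥G α).ncard ≤ (Set.univ : Set (Fin s)).ncard :=
            Set.ncard_le_ncard (Set.subset_univ _) Set.finite_univ
        _ = s := by simp [Set.ncard_univ]
    by_cases hM : H ⊔ N = ⊤
    · -- G/N is a quotient of H; apply the induction hypothesis to H
      have hcardH : Nat.card H ≤ n := by
        have h1 : Nat.card H * H.index = Nat.card ↥G := Subgroup.card_mul_index H
        have h2 : H.index ≠ 1 := fun h => hHtop (Subgroup.index_eq_one.mp h)
        have h3 : H.index ≠ 0 := Subgroup.index_ne_zero_of_finite
        have h4 : 0 < Nat.card H := Nat.card_pos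
        have h6 : 2 ≤ H.index := by omega
        have h5 : Nat.card ↥H < Nat.card ↥G := by
          calc Nat.card ↥H < Nat.card ↥H * 2 := by omega
            _ ≤ Nat.card ↥H * H.index := Nat.mul_le_mul_left _ h6
            _ = Nat.card ↥G := h1
        omega
      set φ : ↥H →* (↥G ⧸ N) := (QuotientGroup.mk' N).comp H.subtype with hφ
      have hφsurj : Function.Surjective φ := by
        intro x
        induction x using QuotientGroup.induction_on with
        | H g =>
          have hg : g ∈ H ⊔ N := hM ▸ Subgroup.mem_top g
          have hg' : g ∈ (H : Set ↥G) * (N : Set ↥G) := by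
            rw [← Subgroup.mul_normal H N]; exact hg
          obtain ⟨h, hh, m, hm, rfl⟩ := hg'
          refine ⟨⟨h, hh⟩, ?_⟩
          simp only [hφ, MonoidHom.comp_apply, Subgroup.coe_subtype, QuotientGroup.mk'_apply]
          exact QuotientGroup.eq.mpr (by simpa using hm)
      have e1 : (↥H ⧸ φ.ker) ≃* (↥G ⧸ N) := QuotientGroup.quotientKerEquivOfSurjective φ hφsurj
      set H₀ : Subgroup (Equiv.Perm (Fin s)) := H.map G.subtype with hH₀
      have e2 : ↥H ≃* ↥H₀ := Subgroup.equivMapOfInjective H G.subtype G.subtype_injective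
      set K₀ : Subgroup ↥H₀ := φ.ker.map e2.toMonoidHom with hK₀
      have hK₀normal : K₀.Normal :=
        Subgroup.Normal.map (MonoidHom.normal_ker φ) e2.toMonoidHom e2.surjective
      have e3 : (↥H ⧸ φ.ker) ≃* (↥H₀ ⧸ K₀) := QuotientGroup.congr φ.ker K₀ e2 rfl
      have e4 : (↥H₀ ⧸ K₀) ≃* (↥G ⧸ N) := e3.symm.trans e1
      haveI := hK₀normal
      haveI hsimple₀ : IsSimpleGroup (↥H₀ ⧸ K₀) := by
        haveI : Nontrivial (↥H₀ ⧸ K₀) := e4.toEquiv.nontrivial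
        exact IsSimpleGroup.isSimpleGroup_of_surjective e4.symm.toMonoidHom e4.symm.surjective
      have hcardH₀ : Nat.card ↥H₀ ≤ n := by
        rw [← Nat.card_congr e2.toEquiv]; exact hcardH
      obtain ⟨f, hf⟩ := ih H₀ hcardH₀ K₀
      exact ⟨f.comp e4.symm.toMonoidHom, hf.comp e4.symm.injective⟩
    · -- G/N acts faithfully on the cosets of M = H ⊔ N
      set M : Subgroup ↥G := H ⊔ N with hMdef
      set φ : ↥G →* Equiv.Perm (↥G ⧸ M) := MulAction.toPermHom ↥G (↥G ⧸ M) with hφ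
      have hker : N ≤ φ.ker := by
        intro x hx
        rw [MonoidHom.mem_ker]
        ext q
        induction q using QuotientGroup.induction_on with
        | H g =>
          show (QuotientGroup.mk (x * g) : ↥G ⧸ M) = QuotientGroup.mk g
          rw [QuotientGroup.eq]
          have hc : g⁻¹ * x⁻¹ * g⁻¹⁻¹ ∈ N := hNnormal.conj_mem _ (N.inv_mem hx) g⁻¹
          have : (x * g)⁻¹ * g ∈ N := by
            simpa [mul_assoc, mul_inv_rev] using hc
          exact Subgroup.mem_sup_right this
      set φ' : (↥G ⧸ N) →* Equiv.Perm (↥G ⧸ M) := QuotientGroup.lift N φ hker with hφ'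
      obtain ⟨g, hg⟩ : ∃ g : ↥G, g ∉ M := by
        by_contra h
        push_neg at h
        exact hM ((Subgroup.eq_top_iff' M).mpr h)
      have hkerφ' : φ'.ker = ⊥ := by
        rcases hsimple.eq_bot_or_eq_top_of_normal φ'.ker (MonoidHom.normal_ker φ') with h | h
        · exact h
        · exfalso
          have hgk : (QuotientGroup.mk g : ↥G ⧸ N) ∈ φ'.ker := h ▸ Subgroup.mem_top _
          rw [MonoidHom.mem_ker] at hgk
          have hφg : φ g = 1 := by
            rwa [hφ', QuotientGroup.lift_mk] at hgk
          have : (QuotientGroup.mk (g * 1) : ↥G ⧸ M) = QuotientGroup.mk (1 : ↥G) := by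
            calc (QuotientGroup.mk (g * 1) : ↥G ⧸ M) = φ g (QuotientGroup.mk 1) := rfl
              _ = QuotientGroup.mk 1 := by rw [hφg]; rfl
          rw [mul_one, QuotientGroup.eq] at this
          exact hg (by simpa using this)
      have hinj : Function.Injective φ' := (MonoidHom.ker_eq_bot_iff φ').mp hkerφ'
      haveI : Fintype (↥G ⧸ M) := Fintype.ofFinite _
      have hcard : Fintype.card (↥G ⧸ M) ≤ Fintype.card (Fin s) := by
        rw [Fintype.card_fin, ← Nat.card_eq_fintype_card]
        have h1 : (Nat.card (↥G ⧸ M)) = M.index := rfl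
        have h2 : M.index ∣ H.index := Subgroup.index_dvd_of_le le_sup_left
        have h3 : H.index ≠ 0 := Subgroup.index_ne_zero_of_finite
        calc Nat.card (↥G ⧸ M) = M.index := h1
          _ ≤ H.index := Nat.le_of_dvd (Nat.pos_of_ne_zero h3) h2
          _ ≤ s := hHindex
      obtain ⟨emb⟩ := Function.Embedding.nonempty_of_card_le hcard
      exact ⟨(Equiv.Perm.viaEmbeddingHom emb).comp φ',
        (Equiv.Perm.viaEmbeddingHom_injective emb).comp hinj⟩

/-- If `G ≤ Sym_s` and `N ⊴ G` with `G/N` simple, then `G/N` embeds into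
`Sym_s`. -/
theorem stmt_17 {s : ℕ} (G : Subgroup (Equiv.Perm (Fin s)))
    (N : Subgroup G) [N.Normal] [IsSimpleGroup (G ⧸ N)] :
    ∃ f : (G ⧸ N) →* Equiv.Perm (Fin s), Function.Injective f :=
  stmt_17_aux (Nat.card G) G le_rfl N
end

section
/- Let G be a group acting transitively on a finite set R of blocks, and suppose there is a normal subgroup M ⊴ G and integers m ≥ 3, s ≥ 1 with |H| ≤ (m!)^s · s!, m^s ≤ r where r = |R|, [G:M] ≤ 2^s · s!, and |G| ≥ r^{1+log₂ r}. Then [G:M] ≤ r. -/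
/-- `n! * 2^(n-1) ≤ n^n` over the reals, for `n ≥ 1`. -/
lemma aux_fact_two_pow (n : ℕ) (hn : 1 ≤ n) :
    (n.factorial : ℝ) * 2 ^ (n - 1) ≤ (n : ℝ) ^ n := by
  induction n, hn using Nat.le_induction with
  | base => norm_num
  | succ n hn ih =>
    have hn0 : (0 : ℝ) < n := by exact_mod_cast hn
    have h2 : 2 * (n : ℝ) ^ n ≤ ((n : ℝ) + 1) ^ n := by
      have hnn : (0 : ℝ) ≤ 1 / (n : ℝ) := by positivity
      have h := one_add_mul_le_pow (show (-2 : ℝ) ≤ 1 / n by linarith) n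
      have he : (1 : ℝ) + n * (1 / n) = 2 := by
        rw [mul_one_div, div_self (ne_of_gt hn0)]; norm_num
      calc 2 * (n : ℝ) ^ n = (1 + (n : ℝ) * (1 / n)) * (n : ℝ) ^ n := by rw [he]
        _ ≤ (1 + 1 / (n : ℝ)) ^ n * (n : ℝ) ^ n :=
            mul_le_mul_of_nonneg_right h (by positivity)
        _ = ((1 + 1 / (n : ℝ)) * n) ^ n := (mul_pow _ _ _).symm
        _ = ((n : ℝ) + 1) ^ n := by
            congr 1
            field_simp
    have hrw : (((n + 1).factorial : ℝ)) * 2 ^ (n + 1 - 1)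
        = ((n : ℝ) + 1) * ((n.factorial : ℝ) * 2 ^ (n - 1)) * 2 := by
      rw [Nat.factorial_succ, show n + 1 - 1 = (n - 1) + 1 from by omega, pow_succ]
      push_cast
      ring
    rw [hrw]
    calc ((n : ℝ) + 1) * ((n.factorial : ℝ) * 2 ^ (n - 1)) * 2
        ≤ ((n : ℝ) + 1) * (n : ℝ) ^ n * 2 := by nlinarith [ih]
      _ = ((n : ℝ) + 1) * (2 * (n : ℝ) ^ n) := by ring
      _ ≤ ((n : ℝ) + 1) * ((n : ℝ) + 1) ^ n :=
          mul_le_mul_of_nonneg_left h2 (by positivity)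
      _ = ((n : ℝ) + 1) ^ (n + 1) := by rw [pow_succ]; ring
      _ = ((n + 1 : ℕ) : ℝ) ^ (n + 1) := by push_cast; ring

/-- `logb 2 (n!) ≤ n·logb 2 n - (n-1)` for `n ≥ 1`. -/
lemma aux_logb_fact (n : ℕ) (hn : 1 ≤ n) :
    Real.logb 2 (n.factorial : ℝ) ≤ (n : ℝ) * Real.logb 2 n - ((n : ℝ) - 1) := by
  have h := aux_fact_two_pow n hn
  have hf : (0 : ℝ) < (n.factorial : ℝ) := by exact_mod_cast n.factorial_pos
  have hnn : (0 : ℝ) < (n : ℝ) := by exact_mod_cast hn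
  have hl := (Real.logb_le_logb one_lt_two (by positivity) (by positivity)).mpr h
  rw [Real.logb_mul (ne_of_gt hf) (by positivity), Real.logb_pow, Real.logb_pow,
    Real.logb_self_eq_one one_lt_two, mul_one] at hl
  have hc : ((n - 1 : ℕ) : ℝ) = (n : ℝ) - 1 := by
    have := Nat.cast_sub hn (R := ℝ); simpa using this
  rw [hc] at hl
  linarith

/-- The index bound in Cameron–Maróti's theorem: from `m ≥ 3`, `s ≥ 1`,
`|G| ≤ (m!)^s·s!`, `m^s ≤ r`, `[G:M] ≤ 2^s·s!` and `|G| ≥ r^{1+log₂ r}`, one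
deduces `[G:M] ≤ r`. -/
theorem stmt_19 {G : Type*} [Group G] [Finite G] {R : Type*} [Fintype R]
    [MulAction G R] (htrans : MulAction.IsPretransitive G R)
    (M : Subgroup G) [M.Normal] (m s r : ℕ)
    (hr : Fintype.card R = r) (hm : 3 ≤ m) (hs : 1 ≤ s)
    (hG : Nat.card G ≤ (Nat.factorial m) ^ s * Nat.factorial s)
    (hms : m ^ s ≤ r)
    (hind : M.index ≤ 2 ^ s * Nat.factorial s)
    (hlow : (r : ℝ) ^ (1 + Real.logb 2 r) ≤ Nat.card G) :
    M.index ≤ r := by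
  refine hind.trans ?_
  by_cases hcase : 2 * s ≤ m
  · -- easy case : `2^s · s! ≤ (2s)^s ≤ m^s ≤ r`
    calc 2 ^ s * s.factorial ≤ 2 ^ s * s ^ s :=
          Nat.mul_le_mul_left _ (Nat.factorial_le_pow s)
      _ = (2 * s) ^ s := (mul_pow 2 s s).symm
      _ ≤ m ^ s := Nat.pow_le_pow_left hcase s
      _ ≤ r := hms
  · -- contradictory case `m < 2s`
    exfalso
    push_neg at hcase
    have hmR : (3 : ℝ) ≤ (m : ℝ) := by exact_mod_cast hm
    have hsR : (1 : ℝ) ≤ (s : ℝ) := by exact_mod_cast hs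
    have hm0 : (0 : ℝ) < m := by linarith
    have hs0 : (0 : ℝ) ≤ s := by linarith
    have hr1 : 1 ≤ r := le_trans (Nat.one_le_pow _ _ (by omega)) hms
    have hrR : (1 : ℝ) ≤ (r : ℝ) := by exact_mod_cast hr1
    have hmsR : ((m : ℝ) ^ s) ≤ (r : ℝ) := by exact_mod_cast hms
    have hmpow1 : (1 : ℝ) ≤ (m : ℝ) ^ s := one_le_pow₀ (by linarith)
    have ha1 : 1 < Real.logb 2 m := by
      have : Real.logb 2 2 < Real.logb 2 m :=
        Real.logb_lt_logb one_lt_two two_pos (by linarith)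
      rwa [Real.logb_self_eq_one one_lt_two] at this
    -- `s · logb 2 m ≤ logb 2 r`
    have hta : (s : ℝ) * Real.logb 2 m ≤ Real.logb 2 r := by
      have h := (Real.logb_le_logb one_lt_two (by positivity) (by positivity)).mpr hmsR
      rwa [Real.logb_pow] at h
    have ht0 : 0 ≤ Real.logb 2 r := Real.logb_nonneg one_lt_two hrR
    -- main chain of inequalities
    have key' : ((m : ℝ) ^ s) ^ (1 + (s : ℝ) * Real.logb 2 m)
        ≤ (m.factorial : ℝ) ^ s * (s.factorial : ℝ) := by
      calc ((m : ℝ) ^ s) ^ (1 + (s : ℝ) * Real.logb 2 m)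
          ≤ ((m : ℝ) ^ s) ^ (1 + Real.logb 2 r) :=
            Real.rpow_le_rpow_of_exponent_le hmpow1 (by linarith)
        _ ≤ (r : ℝ) ^ (1 + Real.logb 2 r) :=
            Real.rpow_le_rpow (by positivity) hmsR (by linarith)
        _ ≤ (Nat.card G : ℝ) := hlow
        _ ≤ (m.factorial : ℝ) ^ s * (s.factorial : ℝ) := by exact_mod_cast hG
    -- take `logb 2` of both sides
    have hrpow_logb : ∀ x y : ℝ, 0 < x → Real.logb 2 (x ^ y) = y * Real.logb 2 x := by
      intro x y hx
      rw [Real.logb, Real.log_rpow hx, Real.logb, mul_div_assoc]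
    have key := (Real.logb_le_logb one_lt_two (by positivity) (by positivity)).mpr key'
    rw [hrpow_logb _ _ (by positivity), Real.logb_pow,
      Real.logb_mul (by positivity) (by positivity), Real.logb_pow] at key
    -- key : (1 + s·a) * (s·a) ≤ s·logb 2 m! + logb 2 s!
    have hA : Real.logb 2 (m.factorial : ℝ)
        ≤ (m : ℝ) * Real.logb 2 m - ((m : ℝ) - 1) := aux_logb_fact m (by omega)
    have hB : Real.logb 2 (s.factorial : ℝ)
        ≤ (s : ℝ) * Real.logb 2 s - ((s : ℝ) - 1) := aux_logb_fact s hs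
    have hbs : Real.logb 2 s ≤ (s : ℝ) - 1 := by
      have h2s : s ≤ 2 ^ (s - 1) := by
        have := Nat.lt_two_pow_self (n := s - 1); omega
      have h := (Real.logb_le_logb one_lt_two (by positivity) (by positivity)).mpr
        (show (s : ℝ) ≤ (2 : ℝ) ^ (s - 1) by exact_mod_cast h2s)
      rw [Real.logb_pow, Real.logb_self_eq_one one_lt_two, mul_one] at h
      have hc : ((s - 1 : ℕ) : ℝ) = (s : ℝ) - 1 := by
        have := Nat.cast_sub hs (R := ℝ); simpa using this
      rwa [hc] at h
    have hm2s : (m : ℝ) ≤ 2 * (s : ℝ) - 1 := by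
      have h1 : m + 1 ≤ 2 * s := hcase
      have h2 : ((m + 1 : ℕ) : ℝ) ≤ ((2 * s : ℕ) : ℝ) := by exact_mod_cast h1
      push_cast at h2
      linarith
    -- derive the numerical contradiction
    have ha0 : (0 : ℝ) < Real.logb 2 m - 1 := by linarith
    have step1 : (s : ℝ) * (m : ℝ) * (Real.logb 2 m - 1)
        ≤ (s : ℝ) * (2 * (s : ℝ) - 1) * (Real.logb 2 m - 1) := by
      nlinarith [mul_le_mul_of_nonneg_left hm2s (mul_nonneg hs0 ha0.le)]
    have hsA : (s : ℝ) * Real.logb 2 (m.factorial : ℝ)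
        ≤ (s : ℝ) * ((m : ℝ) * Real.logb 2 m - ((m : ℝ) - 1)) :=
      mul_le_mul_of_nonneg_left hA hs0
    have hsb : (s : ℝ) * Real.logb 2 s ≤ (s : ℝ) * ((s : ℝ) - 1) :=
      mul_le_mul_of_nonneg_left hbs hs0
    have hfin : 2 * ((s : ℝ) * Real.logb 2 m) ≤ 1 := by
      linarith [key, hsA, hB, step1, hsb,
        sq_nonneg ((s : ℝ) * Real.logb 2 m - (s : ℝ))]
    have hgt : (1 : ℝ) < (s : ℝ) * Real.logb 2 m := by
      have h := le_mul_of_one_le_left (show (0:ℝ) ≤ Real.logb 2 m by linarith) hsR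
      linarith
    linarith
end
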